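/- For all integers k ≥ 1 and n ≥ 1, σ_{k+1}^odd(n) ≤ ∂^k(σ_{k+1}(n)), where σ_{k+1}(n) denotes the number of square-free positive integers ≤ n with exactly k+1 prime factors and σ_{k+1}^odd(n) denotes the number of odd square-free positive integers ≤ n with exactly k+1 prime factors. -/

import Mathlib

/-- Fold a function `g` over the terms `(a_t, t)` of the unique Macaulay-type
representation `n = C(a_{k+1}, k+1) + ⋯ + C(a_i, i)` with
`a_{k+1} > ⋯ > a_i ≥ i ≥ 1`, computed greedily: at each level `t` (from `k+1`
down), `a_t` is the largest `a` with `C(a, t) ≤` the current remainder. -/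
def macRepFold (g : ℕ → ℕ → ℕ) : ℕ → ℕ → ℕ
  | 0, _ => 0
  | t + 1, n =>
    if n = 0 then 0
    else
      let a := Nat.findGreatest (fun a => Nat.choose a (t + 1) ≤ n) (n + t + 1)
      g a (t + 1) + macRepFold g t (n - Nat.choose a (t + 1))

/-- The combinatorial shadow function `∂_k(n) = Σ_t C(a_t, t - 1)`. -/
def partialLower (k n : ℕ) : ℕ := macRepFold (fun a t => Nat.choose a (t - 1)) (k + 1) n

/-- The combinatorial shadow function `∂^k(n) = Σ_t C(a_t - 1, t)`. -/
def partialUpper (k n : ℕ) : ℕ := macRepFold (fun a t => Nat.choose (a - 1) t) (k + 1) n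

/-- The error function `δ_k(n) = #{t : a_t = t}`. -/
def deltaErr (k n : ℕ) : ℕ := macRepFold (fun a t => if a = t then 1 else 0) (k + 1) n

/-- The function `d^k(n) = Σ_t C(a_t + 1, t)`. -/
def dUpper (k n : ℕ) : ℕ := macRepFold (fun a t => Nat.choose (a + 1) t) (k + 1) n

/-- `σ_k(n)`: the number of square-free positive integers `≤ n` with exactly
`k` prime factors. -/
def sigmaSF (k n : ℕ) : ℕ :=
  ((Finset.Icc 1 n).filter (fun m => Squarefree m ∧ m.primeFactors.card = k)).card

/-- `σ_k^odd(n)`: the number of odd square-free positive integers `≤ n` with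
exactly `k` prime factors. -/
def sigmaSFodd (k n : ℕ) : ℕ :=
  ((Finset.Icc 1 n).filter
    (fun m => Odd m ∧ Squarefree m ∧ m.primeFactors.card = k)).card

attribute [-instance] instDecidableEqFin

namespace KKaux
open Finset

lemma macRepFold_zero (g : ℕ → ℕ → ℕ) (t : ℕ) : macRepFold g t 0 = 0 := by
  cases t <;> simp [macRepFold]

lemma choose_lt_choose_succ {a r : ℕ} (hr : 1 ≤ r) (h : r ≤ a + 1) :
    Nat.choose a r < Nat.choose (a + 1) r := by
  obtain ⟨s, rfl⟩ : ∃ s, r = s + 1 := ⟨r - 1, by omega⟩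
  have h2 : Nat.choose (a + 1) (s + 1) = Nat.choose a s + Nat.choose a (s + 1) :=
    Nat.choose_succ_succ a s
  have : 0 < Nat.choose a s := Nat.choose_pos (by omega)
  omega

lemma le_choose_add {a r : ℕ} (hr : 1 ≤ r) (h : r ≤ a) : a + 1 ≤ Nat.choose a r + r := by
  induction a with
  | zero => omega
  | succ a ih =>
    rcases Nat.lt_or_ge r (a + 1) with h' | h'
    · have := ih (by omega)
      have h2 : Nat.choose a r < Nat.choose (a + 1) r := choose_lt_choose_succ hr (by omega)
      omega
    · have : r = a + 1 := by omega
      subst this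
      simp [Nat.choose_self]

lemma macRepFold_eval (g : ℕ → ℕ → ℕ) {t n a : ℕ} (ha1 : t + 1 ≤ a)
    (ha2 : Nat.choose a (t + 1) ≤ n) (ha3 : n < Nat.choose (a + 1) (t + 1)) :
    macRepFold g (t + 1) n = g a (t + 1) + macRepFold g t (n - Nat.choose a (t + 1)) := by
  have hpos : 0 < Nat.choose a (t + 1) := Nat.choose_pos ha1
  have hn0 : ¬ (n = 0) := by omega
  have hfg : Nat.findGreatest (fun x => Nat.choose x (t + 1) ≤ n) (n + t + 1) = a := by
    rw [Nat.findGreatest_eq_iff]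
    refine ⟨?_, fun _ => ha2, fun x hax _ => ?_⟩
    · have := le_choose_add (show 1 ≤ t + 1 by omega) ha1
      omega
    · intro hPx
      have hPx2 : Nat.choose x (t + 1) ≤ n := hPx
      have := Nat.choose_le_choose (t + 1) (show a + 1 ≤ x from hax)
      omega
  rw [macRepFold]
  simp only [hn0, if_false, hfg]

lemma sum_choose_shift (e : ℕ) :
    ∀ t, ∑ j ∈ Icc 1 t, Nat.choose (e + j - 1) j = Nat.choose (e + t) t - 1 := by
  intro t
  induction t with
  | zero => simp
  | succ t ih =>
    rw [Finset.sum_Icc_succ_top (by omega), ih]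
    have h1 : e + (t + 1) - 1 = e + t := by omega
    have h2 : Nat.choose (e + t + 1) (t + 1) = Nat.choose (e + t) t + Nat.choose (e + t) (t + 1) :=
      Nat.choose_succ_succ _ _
    have h3 : 0 < Nat.choose (e + t) t := Nat.choose_pos (by omega)
    rw [h1, show e + (t + 1) = e + t + 1 by omega]
    omega

lemma sum_chain_lt {c : ℕ → ℕ} {i : ℕ} (hi : 1 ≤ i) :
    ∀ r, (∀ j, i ≤ j → j < r → c j < c (j + 1)) → (∀ j, i ≤ j → j ≤ r → j ≤ c j) → i ≤ r →
    ∑ j ∈ Icc i r, Nat.choose (c j) j < Nat.choose (c r + 1) r := by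
  intro r
  induction r with
  | zero => omega
  | succ r ih =>
    intro hmono hge hir
    rcases Nat.lt_or_ge r i with h' | h'
    · -- i = r + 1
      have : i = r + 1 := by omega
      subst this
      rw [show Icc (r+1) (r+1) = {r+1} by simp]
      simp only [Finset.sum_singleton]
      exact choose_lt_choose_succ (by omega) (by have := hge (r+1) le_rfl le_rfl; omega)
    · rw [Finset.sum_Icc_succ_top (by omega)]
      have h1 := ih (fun j hj hj' => hmono j hj (by omega)) (fun j hj hj' => hge j hj (by omega)) h'
      have h2 : c r + 1 ≤ c (r + 1) := hmono r h' (by omega)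
      have h3 : Nat.choose (c r + 1) r ≤ Nat.choose (c (r + 1)) r := Nat.choose_le_choose _ h2
      have h4 : Nat.choose (c (r+1) + 1) (r + 1)
          = Nat.choose (c (r+1)) r + Nat.choose (c (r+1)) (r + 1) := Nat.choose_succ_succ _ _
      omega

lemma macRepFold_chain (g : ℕ → ℕ → ℕ) {i : ℕ} (hi : 1 ≤ i) {c : ℕ → ℕ} :
    ∀ r, (∀ j, i ≤ j → j < r → c j < c (j + 1)) → (∀ j, i ≤ j → j ≤ r → j ≤ c j) →
    macRepFold g r (∑ j ∈ Icc i r, Nat.choose (c j) j) = ∑ j ∈ Icc i r, g (c j) j := by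
  intro r
  induction r with
  | zero =>
    intro _ _
    rw [Finset.Icc_eq_empty (by omega : ¬ (i : ℕ) ≤ 0)]
    simp [macRepFold_zero]
  | succ r ih =>
    intro hmono hge
    by_cases hir : i ≤ r + 1
    · have hsum : ∀ f : ℕ → ℕ, ∑ j ∈ Icc i (r+1), f j = (∑ j ∈ Icc i r, f j) + f (r+1) :=
        fun f => Finset.sum_Icc_succ_top hir f
      have hrest : (∑ j ∈ Icc i r, Nat.choose (c j) j) < Nat.choose (c (r+1)) r := by
        rcases Nat.lt_or_ge r i with h' | h'
        · rw [Finset.Icc_eq_empty (by omega)]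
          simp only [Finset.sum_empty]
          exact Nat.choose_pos (by have := hge (r+1) hir le_rfl; omega)
        · have h1 := sum_chain_lt hi r (fun j hj hj' => hmono j hj (by omega))
            (fun j hj hj' => hge j hj (by omega)) h'
          have h2 : c r + 1 ≤ c (r + 1) := hmono r h' (by omega)
          exact lt_of_lt_of_le h1 (Nat.choose_le_choose _ h2)
      have hge1 : r + 1 ≤ c (r + 1) := hge (r+1) hir le_rfl
      have h4 : Nat.choose (c (r+1) + 1) (r + 1)
          = Nat.choose (c (r+1)) r + Nat.choose (c (r+1)) (r + 1) := Nat.choose_succ_succ _ _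
      rw [hsum, hsum]
      rw [macRepFold_eval g hge1 (by omega) (by omega)]
      have : (∑ j ∈ Icc i r, Nat.choose (c j) j) + Nat.choose (c (r+1)) (r+1)
          - Nat.choose (c (r+1)) (r+1) = ∑ j ∈ Icc i r, Nat.choose (c j) j := by omega
      rw [this, ih (fun j hj hj' => hmono j hj (by omega)) (fun j hj hj' => hge j hj (by omega))]
      omega
    · rw [Finset.Icc_eq_empty (by omega : ¬ i ≤ r + 1)]
      simp [macRepFold_zero]

lemma macRepFold_pred (t m : ℕ) (h : t ≤ m) :
    macRepFold (fun a t => Nat.choose (a - 1) t) t (Nat.choose (m + 1) t - 1)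
      = Nat.choose m t - 1 := by
  cases t with
  | zero => simp [macRepFold]
  | succ t =>
    set r := t + 1
    have hsum : ∑ j ∈ Icc 1 r, Nat.choose (m - r + j) j = Nat.choose (m + 1) r - 1 := by
      have := sum_choose_shift (m - r + 1) r
      rw [show m - r + 1 + r = m + 1 by omega] at this
      rw [← this]
      exact Finset.sum_congr rfl fun j hj => by
        rw [Finset.mem_Icc] at hj
        congr 1
        omega
    have hsum2 : ∑ j ∈ Icc 1 r, Nat.choose (m - r + j - 1) j = Nat.choose m r - 1 := by
      have := sum_choose_shift (m - r) r
      rw [show m - r + r = m by omega] at this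
      exact this
    rw [← hsum]
    rw [macRepFold_chain _ (le_refl 1) r (fun j hj hj' => by omega) (fun j hj hj' => by omega)]
    exact hsum2

lemma macRepFold_mono_succ : ∀ t n,
    macRepFold (fun a t => Nat.choose (a - 1) t) t n
      ≤ macRepFold (fun a t => Nat.choose (a - 1) t) t (n + 1) := by
  intro t
  induction t with
  | zero => intro n; simp [macRepFold]
  | succ t ih =>
    intro n
    rcases Nat.eq_zero_or_pos n with rfl | hn
    · rw [macRepFold_zero]
      exact Nat.zero_le _
    · set a := Nat.findGreatest (fun x => Nat.choose x (t + 1) ≤ n) (n + t + 1) with ha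
      have hP : (fun x => Nat.choose x (t + 1) ≤ n) (t + 1) := by
        show Nat.choose (t + 1) (t + 1) ≤ n
        rw [Nat.choose_self]; exact hn
      have h1 : t + 1 ≤ a := Nat.le_findGreatest (by omega) hP
      have h2 : Nat.choose a (t + 1) ≤ n :=
        Nat.findGreatest_spec (P := fun x => Nat.choose x (t + 1) ≤ n) (by omega) hP
      have h3 : n < Nat.choose (a + 1) (t + 1) := by
        by_cases hb : a + 1 ≤ n + t + 1
        · have hng := Nat.findGreatest_is_greatest
            (P := fun x => Nat.choose x (t + 1) ≤ n) (show a < a + 1 by omega) hb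
          have : ¬ (Nat.choose (a + 1) (t + 1) ≤ n) := hng
          omega
        · have hle : a ≤ n + t + 1 := Nat.findGreatest_le _
          have := le_choose_add (show 1 ≤ t + 1 by omega) h1
          omega
      have hLHS := macRepFold_eval (fun a t => Nat.choose (a - 1) t) h1 h2 h3
      by_cases hc : Nat.choose (a + 1) (t + 1) ≤ n + 1
      · have hn1 : n + 1 = Nat.choose (a + 1) (t + 1) := by omega
        have h5 : Nat.choose (a + 1) (t + 1) = Nat.choose a t + Nat.choose a (t + 1) :=
          Nat.choose_succ_succ a t
        have hCt : 0 < Nat.choose a t := Nat.choose_pos (by omega)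
        have h3' : n + 1 < Nat.choose (a + 2) (t + 1) := by
          have h6 : Nat.choose (a + 2) (t + 1)
              = Nat.choose (a + 1) t + Nat.choose (a + 1) (t + 1) := Nat.choose_succ_succ _ _
          have : 0 < Nat.choose (a + 1) t := Nat.choose_pos (by omega)
          omega
        have hRHS := macRepFold_eval (fun a t => Nat.choose (a - 1) t)
          (show t + 1 ≤ a + 1 by omega) (le_of_eq hn1.symm) h3'
        rw [hLHS, hRHS]
        rw [show n + 1 - Nat.choose (a + 1) (t + 1) = 0 by omega, macRepFold_zero]
        rw [show n - Nat.choose a (t + 1) = Nat.choose ((a - 1) + 1) t - 1 by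
          rw [show a - 1 + 1 = a by omega]; omega]
        rw [macRepFold_pred t (a - 1) (by omega)]
        have h7 : Nat.choose (a - 1 + 1) (t + 1)
            = Nat.choose (a - 1) t + Nat.choose (a - 1) (t + 1) := Nat.choose_succ_succ _ _
        rw [show a - 1 + 1 = a by omega] at h7
        have : 0 < Nat.choose (a - 1) t := Nat.choose_pos (by omega)
        beta_reduce
        rw [show a + 1 - 1 = a by omega]
        omega
      · have hRHS := macRepFold_eval (fun a t => Nat.choose (a - 1) t) h1
          (show Nat.choose a (t + 1) ≤ n + 1 by omega) (by omega)
        rw [hLHS, hRHS]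
        rw [show n + 1 - Nat.choose a (t + 1) = (n - Nat.choose a (t + 1)) + 1 by omega]
        exact Nat.add_le_add_left (ih _) _

lemma macRepFold_mono (t : ℕ) : Monotone (macRepFold (fun a t => Nat.choose (a - 1) t) t) :=
  monotone_nat_of_le_succ (macRepFold_mono_succ t)

lemma icc_split (p r : ℕ) (h1 : 1 ≤ p) (h2 : p ≤ r) (f : ℕ → ℕ) :
    ∑ j ∈ Icc 1 r, f j = (∑ j ∈ Icc 1 p, f j) + ∑ j ∈ Icc (p + 1) r, f j := by
  have : Icc 1 r = Icc 1 p ∪ Icc (p + 1) r := by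
    ext x; simp only [Finset.mem_Icc, Finset.mem_union]; omega
  rw [this, Finset.sum_union]
  simp only [Finset.disjoint_left, Finset.mem_Icc]
  omega

lemma icc_bot_split (p r : ℕ) (h2 : p ≤ r) (f : ℕ → ℕ) :
    ∑ j ∈ Icc p r, f j = f p + ∑ j ∈ Icc (p + 1) r, f j := by
  have : Icc p r = insert p (Icc (p + 1) r) := by
    ext x; simp only [Finset.mem_Icc, Finset.mem_insert]; omega
  rw [this, Finset.sum_insert]
  simp only [Finset.mem_Icc]; omega

lemma cascade {c : ℕ → ℕ} {r : ℕ} (hr : 1 ≤ r)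
    (hmono : ∀ j, 1 ≤ j → j < r → c j < c (j + 1))
    (hge : ∀ j, 1 ≤ j → j ≤ r → j - 1 ≤ c j) :
    macRepFold (fun a t => Nat.choose (a - 1) t) r
        (1 + ∑ j ∈ Icc 1 r, Nat.choose (c j + 1) j)
      = 1 + ∑ j ∈ Icc 1 r, Nat.choose (c j) j := by
  classical
  set P : ℕ → Prop := fun p => ∀ j, 1 ≤ j → j ≤ p → c j = c 1 + j - 1 with hPdef
  have hP1 : P 1 := by
    intro j h1 h2
    have hj : j = 1 := by omega
    subst hj
    omega
  set p := Nat.findGreatest P r with hp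
  have hp1 : 1 ≤ p := Nat.le_findGreatest hr hP1
  have hpr : p ≤ r := Nat.findGreatest_le _
  have hPp : P p := Nat.findGreatest_spec hr hP1
  have hmax : p < r → c p + 2 ≤ c (p + 1) := by
    intro hplt
    by_contra hcon
    have h1 : c p < c (p + 1) := hmono p hp1 hplt
    have hcp : c p = c 1 + p - 1 := hPp p hp1 le_rfl
    have : P (p + 1) := by
      intro j hj1 hj2
      rcases Nat.lt_or_ge j (p + 1) with h | h
      · exact hPp j hj1 (by omega)
      · have : j = p + 1 := by omega
        subst this
        omega
    exact Nat.findGreatest_is_greatest (show p < p + 1 by omega) (by omega) this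
  -- lower part sums
  have hlow1 : ∑ j ∈ Icc 1 p, Nat.choose (c j + 1) j = Nat.choose (c 1 + 1 + p) p - 1 := by
    rw [← sum_choose_shift (c 1 + 1) p]
    exact Finset.sum_congr rfl fun j hj => by
      rw [Finset.mem_Icc] at hj
      have := hPp j hj.1 hj.2
      congr 1
      omega
  have hlow2 : ∑ j ∈ Icc 1 p, Nat.choose (c j) j = Nat.choose (c 1 + p) p - 1 := by
    rw [← sum_choose_shift (c 1) p]
    exact Finset.sum_congr rfl fun j hj => by
      rw [Finset.mem_Icc] at hj
      rw [hPp j hj.1 hj.2]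
  have hposlow : 0 < Nat.choose (c 1 + 1 + p) p := Nat.choose_pos (by omega)
  have hposlow2 : 0 < Nat.choose (c 1 + p) p := Nat.choose_pos (by omega)
  have hcp : c p = c 1 + p - 1 := hPp p hp1 le_rfl
  -- new chain
  set cc : ℕ → ℕ := fun j => if j = p then c 1 + p + 1 else c j + 1 with hcc
  have hccp : cc p = c 1 + p + 1 := by rw [hcc]; simp
  have hccj : ∀ j, j ≠ p → cc j = c j + 1 := by intro j hj; rw [hcc]; simp [hj]
  have hc'mono : ∀ j, p ≤ j → j < r → cc j < cc (j + 1) := by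
    intro j hj hjr
    rcases Nat.eq_or_lt_of_le hj with h | h
    · rw [← h, hccp, hccj (p + 1) (by omega)]
      have := hmax (by omega)
      omega
    · rw [hccj j (by omega), hccj (j + 1) (by omega)]
      have := hmono j (by omega) hjr
      omega
  have hc'ge : ∀ j, p ≤ j → j ≤ r → j ≤ cc j := by
    intro j hj hjr
    rcases Nat.eq_or_lt_of_le hj with h | h
    · rw [← h, hccp]; omega
    · rw [hccj j (by omega)]
      have := hge j (by omega) hjr
      omega
  have hupper : ∑ j ∈ Icc (p + 1) r, Nat.choose (cc j) j
      = ∑ j ∈ Icc (p + 1) r, Nat.choose (c j + 1) j := by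
    refine Finset.sum_congr rfl fun j hj => ?_
    rw [Finset.mem_Icc] at hj
    rw [hccj j (by omega)]
  have hkey : 1 + ∑ j ∈ Icc 1 r, Nat.choose (c j + 1) j
      = ∑ j ∈ Icc p r, Nat.choose (cc j) j := by
    rw [icc_split p r hp1 hpr, hlow1, icc_bot_split p r hpr, hccp, hupper,
      show c 1 + p + 1 = c 1 + 1 + p from by omega]
    omega
  rw [hkey, macRepFold_chain _ hp1 r hc'mono hc'ge]
  rw [icc_bot_split p r hpr (fun j => Nat.choose (cc j - 1) j), icc_split p r hp1 hpr, hlow2]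
  have h2 : ∑ j ∈ Icc (p + 1) r, Nat.choose (cc j - 1) j
      = ∑ j ∈ Icc (p + 1) r, Nat.choose (c j) j := by
    refine Finset.sum_congr rfl fun j hj => ?_
    rw [Finset.mem_Icc] at hj
    rw [hccj j (by omega)]
    simp
  rw [h2, hccp]
  have h3 : c 1 + p + 1 - 1 = c 1 + p := by omega
  rw [h3]
  omega

lemma numeric_main {r a : ℕ} {c : ℕ → ℕ} (hr : 1 ≤ r)
    (hmono : ∀ j, 1 ≤ j → j < r → c j < c (j + 1))
    (hge : ∀ j, 1 ≤ j → j ≤ r → j - 1 ≤ c j)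
    (ha : 1 + ∑ j ∈ Icc 1 r, Nat.choose (c j + 1) j ≤ a) :
    1 + ∑ j ∈ Icc 1 r, Nat.choose (c j) j
      ≤ macRepFold (fun a t => Nat.choose (a - 1) t) r a := by
  rw [← cascade hr hmono hge]
  exact macRepFold_mono r ha

lemma exists_chain : ∀ r, 1 ≤ r → ∀ m, ∃ c : ℕ → ℕ,
    (∀ j, 1 ≤ j → j < r → c j < c (j + 1)) ∧ (∀ j, 1 ≤ j → j ≤ r → j - 1 ≤ c j) ∧
    (∑ j ∈ Icc 1 r, Nat.choose (c j) j = m) ∧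
    (∀ β, r ≤ β → m < Nat.choose β r → c r < β) := by
  intro r
  induction r with
  | zero => omega
  | succ r ih =>
    intro _ m
    rcases Nat.eq_zero_or_pos r with rfl | hr
    · refine ⟨fun _ => m, by omega, by omega, ?_, ?_⟩
      · simp [Finset.Icc_self]
      · intro β h1 h2
        simpa using h2
    · -- r ≥ 1
      set a := Nat.findGreatest (fun x => Nat.choose x (r + 1) ≤ m) (m + r + 1) with hadef
      have hP : (fun x => Nat.choose x (r + 1) ≤ m) r := by
        have : Nat.choose r (r + 1) = 0 := Nat.choose_eq_zero_of_lt (by omega)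
        simp [this]
      have h1 : r ≤ a := Nat.le_findGreatest (by omega) hP
      have h2 : Nat.choose a (r + 1) ≤ m :=
        Nat.findGreatest_spec (P := fun x => Nat.choose x (r + 1) ≤ m) (by omega) hP
      have h3 : m < Nat.choose (a + 1) (r + 1) := by
        by_cases hb : a + 1 ≤ m + r + 1
        · have hng := Nat.findGreatest_is_greatest
            (P := fun x => Nat.choose x (r + 1) ≤ m) (show a < a + 1 by omega) hb
          have : ¬ (Nat.choose (a + 1) (r + 1) ≤ m) := hng
          omega
        · have hle : a ≤ m + r + 1 := Nat.findGreatest_le _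
          have hra : r + 1 ≤ a := by omega
          have := le_choose_add (show 1 ≤ r + 1 by omega) hra
          omega
      have hpas : Nat.choose (a + 1) (r + 1) = Nat.choose a r + Nat.choose a (r + 1) :=
        Nat.choose_succ_succ _ _
      obtain ⟨c₀, hc₀mono, hc₀ge, hc₀sum, hc₀bd⟩ := ih hr (m - Nat.choose a (r + 1))
      have hcr : c₀ r < a := hc₀bd a h1 (by omega)
      refine ⟨fun j => if j = r + 1 then a else c₀ j, ?_, ?_, ?_, ?_⟩
      · intro j hj1 hj2
        rcases Nat.lt_or_ge j r with h | h
        · simp only [if_neg (by omega : ¬ j = r + 1), if_neg (by omega : ¬ j + 1 = r + 1)]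
          exact hc₀mono j hj1 h
        · have hjr : j = r := by omega
          simp only [if_neg (show ¬ j = r + 1 by omega), if_pos (show j + 1 = r + 1 by omega)]
          rw [hjr]
          exact hcr
      · intro j hj1 hj2
        rcases Nat.lt_or_ge j (r + 1) with h | h
        · simp only [if_neg (by omega : ¬ j = r + 1)]
          exact hc₀ge j hj1 (by omega)
        · simp only [if_pos (show j = r + 1 by omega)]
          omega
      · rw [Finset.sum_Icc_succ_top (by omega)]
        beta_reduce
        rw [show (if r + 1 = r + 1 then a else c₀ (r + 1)) = a from if_pos rfl]
        have : ∑ j ∈ Icc 1 r, Nat.choose (if j = r + 1 then a else c₀ j) j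
            = ∑ j ∈ Icc 1 r, Nat.choose (c₀ j) j := by
          refine Finset.sum_congr rfl fun j hj => ?_
          rw [Finset.mem_Icc] at hj
          simp only [if_neg (by omega : ¬ j = r + 1)]
        rw [this, hc₀sum]
        omega
      · intro β hβ1 hβ2
        beta_reduce
        rw [show (if r + 1 = r + 1 then a else c₀ (r + 1)) = a from if_pos rfl]
        by_contra hcon
        have : Nat.choose β (r + 1) ≤ Nat.choose a (r + 1) := Nat.choose_le_choose _ (by omega)
        omega

section Rank

def emb (N : ℕ) (hN : 0 < N) (x : ℕ) : Fin N := ⟨x % N, Nat.mod_lt x hN⟩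

lemma emb_val {N : ℕ} (hN : 0 < N) {x : ℕ} (hx : x < N) : (emb N hN x).val = x :=
  Nat.mod_eq_of_lt hx

lemma chain_lt {c : ℕ → ℕ} {r : ℕ} (hmono : ∀ j, 1 ≤ j → j < r → c j < c (j + 1)) :
    ∀ j i, 1 ≤ i → i < j → j ≤ r → c i < c j := by
  intro j
  induction j with
  | zero => omega
  | succ j ih =>
    intro i h1 h2 h3
    rcases Nat.lt_or_ge i j with h | h
    · exact lt_trans (ih i h1 h (by omega)) (hmono j (by omega) (by omega))
    · have hij : i = j := by omega
      subst hij
      exact hmono i h1 (by omega)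

lemma card_initSeg {N : ℕ} (hN : 0 < N) :
    ∀ (r : ℕ) (c : ℕ → ℕ), (∀ j, 1 ≤ j → j < r → c j < c (j + 1)) →
      (∀ j, 1 ≤ j → j ≤ r → c j < N) →
      (Finset.Colex.initSeg ((Finset.Icc 1 r).image (fun j => emb N hN (c j)))).card
        = 1 + ∑ j ∈ Finset.Icc 1 r, Nat.choose (c j) j := by
  intro r
  induction r with
  | zero =>
    intro c _ _
    have h0 : (Finset.Icc 1 0 : Finset ℕ) = ∅ := by simp
    rw [h0, Finset.image_empty]
    have hseg : Finset.Colex.initSeg (∅ : Finset (Fin N)) = {∅} := by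
      ext t
      simp only [Finset.Colex.mem_initSeg, Finset.card_empty, Finset.mem_singleton]
      constructor
      · rintro ⟨h1, _⟩
        exact Finset.card_eq_zero.mp h1.symm
      · rintro rfl
        simp
    rw [hseg]
    simp
  | succ r ih =>
    intro c hmono hlt
    set f : ℕ → Fin N := fun j => emb N hN (c j) with hf
    have hfval : ∀ j, 1 ≤ j → j ≤ r + 1 → (f j).val = c j :=
      fun j h1 h2 => emb_val hN (hlt j h1 h2)
    have hflt : ∀ i j, 1 ≤ i → i < j → j ≤ r + 1 → f i < f j := by
      intro i j h1 h2 h3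
      have := chain_lt hmono j i h1 h2 h3
      rw [Fin.lt_def, hfval i h1 (by omega), hfval j (by omega) h3]
      exact this
    set M : Fin N := f (r + 1) with hM
    set s' : Finset (Fin N) := (Finset.Icc 1 r).image f with hs'
    have hicc : Finset.Icc 1 (r + 1) = insert (r + 1) (Finset.Icc 1 r) := by
      ext x
      simp only [Finset.mem_Icc, Finset.mem_insert]
      omega
    have hsins : (Finset.Icc 1 (r + 1)).image f = insert M s' := by
      rw [hicc, Finset.image_insert]
    have hMs' : M ∉ s' := by
      intro hmem
      rw [hs', Finset.mem_image] at hmem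
      obtain ⟨j, hj, hfj⟩ := hmem
      rw [Finset.mem_Icc] at hj
      have := hflt j (r + 1) hj.1 (by omega) le_rfl
      rw [hfj] at this
      exact lt_irrefl _ this
    have hs'card : s'.card = r := by
      rw [hs', Finset.card_image_of_injOn, Nat.card_Icc]
      · omega
      · intro x hx y hy hxy
        simp only [Finset.coe_Icc, Set.mem_Icc] at hx hy
        by_contra hne
        rcases Nat.lt_or_ge x y with h | h
        · have := hflt x y hx.1 h (by omega)
          rw [hxy] at this
          exact lt_irrefl _ this
        · have hyx : y < x := by omega
          have := hflt y x hy.1 hyx (by omega)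
          rw [hxy] at this
          exact lt_irrefl _ this
    have hscard : ((Finset.Icc 1 (r + 1)).image f).card = r + 1 := by
      rw [hsins, Finset.card_insert_of_notMem hMs', hs'card]
    have hs'lt : ∀ b ∈ s', b < M := by
      intro b hb
      rw [hs', Finset.mem_image] at hb
      obtain ⟨j, hj, rfl⟩ := hb
      rw [Finset.mem_Icc] at hj
      exact hflt j (r + 1) hj.1 (by omega) le_rfl
    have hsle : ∀ b ∈ insert M s', b ≤ M := by
      intro b hb
      rcases Finset.mem_insert.mp hb with rfl | hb
      · exact le_rfl
      · exact le_of_lt (hs'lt b hb)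
    set X : Finset (Finset (Fin N)) := Finset.powersetCard (r + 1) (Finset.Iio M) with hX
    set Y : Finset (Finset (Fin N)) := (Finset.Colex.initSeg s').image (insert M) with hY
    have hYnoM : ∀ u ∈ Finset.Colex.initSeg s', M ∉ u := by
      intro u hu hMu
      rw [Finset.Colex.mem_initSeg] at hu
      exact lt_irrefl _ (Finset.Colex.forall_lt_mono hu.2 hs'lt M hMu)
    have hunion : Finset.Colex.initSeg ((Finset.Icc 1 (r + 1)).image f) = X ∪ Y := by
      ext t
      rw [Finset.Colex.mem_initSeg, Finset.mem_union, hsins]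
      constructor
      · rintro ⟨hcard, hle⟩
        by_cases hMt : M ∈ t
        · right
          rw [hY, Finset.mem_image]
          refine ⟨t.erase M, ?_, Finset.insert_erase hMt⟩
          rw [Finset.Colex.mem_initSeg]
          constructor
          · rw [Finset.card_insert_of_notMem hMs', hs'card] at hcard
            rw [Finset.card_erase_of_mem hMt, hs'card]
            omega
          · have h2 : ({M} : Finset (Fin N)) ⊆ t := Finset.singleton_subset_iff.mpr hMt
            have h1 : ({M} : Finset (Fin N)) ⊆ insert M s' := by simp
            have hiff := Finset.Colex.toColex_sdiff_le_toColex_sdiff h2 h1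
            rw [← Finset.erase_eq, ← Finset.erase_eq, Finset.erase_insert hMs'] at hiff
            exact hiff.mpr hle
        · left
          rw [hX, Finset.mem_powersetCard]
          constructor
          · intro b hb
            rw [Finset.mem_Iio]
            have hble := Finset.Colex.forall_le_mono hle hsle b hb
            exact lt_of_le_of_ne hble (by rintro rfl; exact hMt hb)
          · rw [Finset.card_insert_of_notMem hMs', hs'card] at hcard
            omega
      · rintro (htX | htY)
        · rw [hX, Finset.mem_powersetCard] at htX
          have hlt' : ∀ b ∈ t, b < M := by
            intro b hb
            have := htX.1 hb
            rwa [Finset.mem_Iio] at this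
          constructor
          · rw [Finset.card_insert_of_notMem hMs', hs'card, htX.2]
          · refine le_of_lt ?_
            rw [Finset.Colex.toColex_lt_toColex_iff_exists_forall_lt]
            refine ⟨M, Finset.mem_insert_self _ _, fun hMt => lt_irrefl _ (hlt' M hMt), ?_⟩
            intro b hb _
            exact hlt' b hb
        · rw [hY, Finset.mem_image] at htY
          obtain ⟨u, hu, rfl⟩ := htY
          have hMu : M ∉ u := hYnoM u hu
          rw [Finset.Colex.mem_initSeg] at hu
          constructor
          · rw [Finset.card_insert_of_notMem hMs', Finset.card_insert_of_notMem hMu]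
            omega
          · have h2 : ({M} : Finset (Fin N)) ⊆ insert M u := by simp
            have h1 : ({M} : Finset (Fin N)) ⊆ insert M s' := by simp
            have hiff := Finset.Colex.toColex_sdiff_le_toColex_sdiff h2 h1
            rw [← Finset.erase_eq, ← Finset.erase_eq, Finset.erase_insert hMs',
              Finset.erase_insert hMu] at hiff
            exact hiff.mp hu.2
    have hdisj : Disjoint X Y := by
      rw [Finset.disjoint_left]
      intro t htX htY
      rw [hX, Finset.mem_powersetCard] at htX
      rw [hY, Finset.mem_image] at htY
      obtain ⟨u, hu, rfl⟩ := htY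
      have h1 := htX.1 (Finset.mem_insert_self M u)
      rw [Finset.mem_Iio] at h1
      exact lt_irrefl _ h1
    have hinj : Set.InjOn (insert M) (Finset.Colex.initSeg s' : Set (Finset (Fin N))) := by
      intro u hu v hv huv
      have hMu : M ∉ u := hYnoM u (Finset.mem_coe.mp hu)
      have hMv : M ∉ v := hYnoM v (Finset.mem_coe.mp hv)
      have : (insert M u).erase M = (insert M v).erase M := by rw [huv]
      rwa [Finset.erase_insert hMu, Finset.erase_insert hMv] at this
    have hMval : (M : ℕ) = c (r + 1) := hfval (r + 1) (by omega) le_rfl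
    rw [hunion, Finset.card_union_of_disjoint hdisj, hX, Finset.card_powersetCard,
      Fin.card_Iio, hY, Finset.card_image_of_injOn hinj,
      ih c (fun j h1 h2 => hmono j h1 (by omega)) (fun j h1 h2 => hlt j h1 (by omega)),
      Finset.sum_Icc_succ_top (by omega : 1 ≤ r + 1), hMval]
    omega

end Rank

lemma erase_min_image {N r : ℕ} (hN : 0 < N) (c : ℕ → ℕ)
    (hmono : ∀ j, 1 ≤ j → j < r + 1 → c j < c (j + 1))
    (hlt : ∀ j, 1 ≤ j → j ≤ r + 1 → c j < N)
    (hne : ((Finset.Icc 1 (r + 1)).image (fun j => emb N hN (c j))).Nonempty) :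
    ((Finset.Icc 1 (r + 1)).image (fun j => emb N hN (c j))).erase
        (((Finset.Icc 1 (r + 1)).image (fun j => emb N hN (c j))).min' hne)
      = (Finset.Icc 1 r).image (fun j => emb N hN (c (j + 1))) := by
  set f : ℕ → Fin N := fun j => emb N hN (c j) with hf
  set s : Finset (Fin N) := (Finset.Icc 1 (r + 1)).image f with hs
  have hflt : ∀ i j, 1 ≤ i → i < j → j ≤ r + 1 → f i < f j := by
    intro i j h1 h2 h3
    have := chain_lt hmono j i h1 h2 h3
    rw [Fin.lt_def, emb_val hN (hlt i h1 (by omega)), emb_val hN (hlt j (by omega) h3)]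
    exact this
  have hmem1 : f 1 ∈ s := by
    rw [hs, Finset.mem_image]
    exact ⟨1, by simp, rfl⟩
  have hmin : s.min' hne = f 1 := by
    refine le_antisymm (Finset.min'_le _ _ hmem1) ?_
    refine Finset.le_min' _ _ _ ?_
    intro y hy
    rw [hs, Finset.mem_image] at hy
    obtain ⟨j, hj, rfl⟩ := hy
    rw [Finset.mem_Icc] at hj
    rcases Nat.eq_or_lt_of_le hj.1 with h | h
    · rw [← h]
    · exact le_of_lt (hflt 1 j le_rfl h hj.2)
  rw [hmin]
  ext x
  simp only [Finset.mem_erase, hs, Finset.mem_image, Finset.mem_Icc]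
  constructor
  · rintro ⟨hx1, j, hj, rfl⟩
    have hj1 : j ≠ 1 := by rintro rfl; exact hx1 rfl
    refine ⟨j - 1, by omega, ?_⟩
    rw [show j - 1 + 1 = j by omega]
  · rintro ⟨j, hj, rfl⟩
    constructor
    · intro h
      have h' : f (j + 1) = f 1 := h
      have := hflt 1 (j + 1) le_rfl (by omega) (by omega)
      rw [h'] at this
      exact lt_irrefl _ this
    · exact ⟨j + 1, by omega, rfl⟩

lemma even_partner {n r m p : ℕ} (hm1 : 1 ≤ m) (hmn : m ≤ n) (hodd : Odd m)
    (hsf : Squarefree m) (hcard : m.primeFactors.card = r) (hp : p ∈ m.primeFactors) :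
    ∃ m', 1 ≤ m' ∧ m' ≤ n ∧ Squarefree m' ∧ m'.primeFactors.card = r ∧
      m'.primeFactors = insert 2 (m.primeFactors.erase p) := by
  have hpp : p.Prime := Nat.prime_of_mem_primeFactors hp
  have hpdvd : p ∣ m := Nat.dvd_of_mem_primeFactors hp
  obtain ⟨d, hmd⟩ : ∃ d, m = d * p := ⟨m / p, (Nat.div_mul_cancel hpdvd).symm⟩
  have hd0 : d ≠ 0 := by
    intro h0
    rw [h0, Nat.zero_mul] at hmd
    omega
  have hdd : d ∣ m := ⟨p, hmd⟩
  have hsfd : Squarefree d := hsf.squarefree_of_dvd hdd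
  have hpd : ¬ p ∣ d := by
    intro h
    obtain ⟨e, rfl⟩ := h
    have : p * p ∣ m := ⟨e, by rw [hmd]; ring⟩
    have := hsf p this
    rw [Nat.isUnit_iff] at this
    exact hpp.one_lt.ne' this
  have h2m : ¬ 2 ∣ m := by
    have := Nat.odd_iff.mp hodd
    intro h
    omega
  have h2d : ¬ 2 ∣ d := fun h => h2m (h.trans hdd)
  have hp2 : p ≠ 2 := by rintro rfl; exact h2m hpdvd
  have hp3 : 2 < p := by
    have := hpp.two_le
    omega
  have hpfm : m.primeFactors = insert p d.primeFactors := by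
    rw [hmd, Nat.primeFactors_mul hd0 hpp.pos.ne', hpp.primeFactors]
    rw [Finset.union_comm, ← Finset.insert_eq]
  have hppfd : p ∉ d.primeFactors := by
    intro h
    exact hpd (Nat.dvd_of_mem_primeFactors h)
  have h2pfd : (2 : ℕ) ∉ d.primeFactors := by
    intro h
    exact h2d (Nat.dvd_of_mem_primeFactors h)
  refine ⟨2 * d, by omega, ?_, ?_, ?_, ?_⟩
  · calc 2 * d ≤ p * d := Nat.mul_le_mul_right d (by omega)
    _ = m := by rw [hmd]; ring
    _ ≤ n := hmn
  · rw [Nat.squarefree_mul_iff]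
    exact ⟨(Nat.Prime.coprime_iff_not_dvd Nat.prime_two).mpr h2d, Nat.prime_two.squarefree, hsfd⟩
  · rw [Nat.primeFactors_mul (by omega) hd0, Nat.prime_two.primeFactors,
      ← Finset.insert_eq, Finset.card_insert_of_notMem h2pfd]
    rw [hpfm, Finset.card_insert_of_notMem hppfd] at hcard
    omega
  · rw [Nat.primeFactors_mul (by omega) hd0, Nat.prime_two.primeFactors,
      ← Finset.insert_eq, hpfm, Finset.erase_insert hppfd]

lemma count_prime_lt {p : ℕ} (hp : p.Prime) : Nat.count Nat.Prime p < p := by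
  rw [Nat.count_eq_card_filter_range]
  have hsub : (Finset.range p).filter Nat.Prime ⊆ (Finset.range p).erase 0 := by
    intro x hx
    rw [Finset.mem_filter] at hx
    rw [Finset.mem_erase]
    exact ⟨hx.2.pos.ne', hx.1⟩
  have h1 : #(Finset.filter (fun x => Nat.Prime x) (Finset.range p))
      ≤ #((Finset.range p).erase 0) := Finset.card_le_card hsub
  rw [Finset.card_erase_of_mem (by simp [hp.pos]), Finset.card_range] at h1
  have := hp.pos
  omega

lemma count_two : Nat.count Nat.Prime 2 = 0 := by
  rw [show (2 : ℕ) = 1 + 1 from rfl, Nat.count_succ, show (1 : ℕ) = 0 + 1 from rfl,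
    Nat.count_succ, Nat.count_zero]
  simp [Nat.not_prime_zero, Nat.not_prime_one]

lemma count_three : Nat.count Nat.Prime 3 = 1 := by
  rw [show (3 : ℕ) = 2 + 1 from rfl, Nat.count_succ, count_two]
  simp [Nat.prime_two]

lemma card_image_chain {N : ℕ} (hN : 0 < N) {c : ℕ → ℕ} {r : ℕ}
    (hmono : ∀ j, 1 ≤ j → j < r → c j < c (j + 1))
    (hlt : ∀ j, 1 ≤ j → j ≤ r → c j < N) :
    ((Finset.Icc 1 r).image (fun j => emb N hN (c j))).card = r := by
  rw [Finset.card_image_of_injOn, Nat.card_Icc]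
  · omega
  · intro x hx y hy hxy
    simp only [Finset.coe_Icc, Set.mem_Icc] at hx hy
    have hval : ∀ j, 1 ≤ j → j ≤ r → (emb N hN (c j)).val = c j :=
      fun j h1 h2 => emb_val hN (hlt j h1 h2)
    by_contra hne
    rcases Nat.lt_or_ge x y with h | h
    · have h2 := chain_lt hmono y x hx.1 h hy.2
      have := congrArg Fin.val hxy
      rw [hval x hx.1 hx.2, hval y hy.1 hy.2] at this
      omega
    · have hyx : y < x := by omega
      have h2 := chain_lt hmono x y hy.1 hyx hx.2
      have := congrArg Fin.val hxy
      rw [hval x hx.1 hx.2, hval y hy.1 hy.2] at this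
      omega

end KKaux


open KKaux Finset

/-- Corollary 1.7: `σ_{k+1}^odd(n) ≤ ∂^k(σ_{k+1}(n))` for all `k ≥ 1`. -/
theorem sigmaSFodd_le_partialUpper_sigmaSF (k n : ℕ) (hk : 1 ≤ k) (hn : 1 ≤ n) :
    sigmaSFodd (k + 1) n ≤ partialUpper k (sigmaSF (k + 1) n) := by

  classical
  have hn0 : 0 < n := hn
  unfold sigmaSFodd sigmaSF partialUpper
  set A := (Finset.Icc 1 n).filter
      (fun m => Squarefree m ∧ m.primeFactors.card = (k + 1)) with hA
  set Ao := (Finset.Icc 1 n).filter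
      (fun m => Odd m ∧ Squarefree m ∧ m.primeFactors.card = (k + 1)) with hAo
  rcases Nat.eq_zero_or_pos Ao.card with hb0 | hb1
  · rw [hb0]
    exact Nat.zero_le _
  set f : ℕ → Fin n := fun p => emb n hn0 (Nat.count Nat.Prime p) with hf
  set S : ℕ → Finset (Fin n) := fun m => m.primeFactors.image f with hS
  have hmemA : ∀ m ∈ A, 1 ≤ m ∧ m ≤ n ∧ Squarefree m ∧ m.primeFactors.card = k + 1 := by
    intro m hm
    rw [hA, Finset.mem_filter, Finset.mem_Icc] at hm
    tauto
  have hmemAo : ∀ m ∈ Ao, Odd m ∧ m ∈ A := by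
    intro m hm
    rw [hAo, Finset.mem_filter, Finset.mem_Icc] at hm
    rw [hA, Finset.mem_filter, Finset.mem_Icc]
    tauto
  have hprimele : ∀ m : ℕ, m ≤ n → ∀ p ∈ m.primeFactors, p.Prime ∧ p ≤ n := by
    intro m hmn p hp
    refine ⟨Nat.prime_of_mem_primeFactors hp, ?_⟩
    have hm0 : m ≠ 0 := by
      rintro rfl
      simp at hp
    have h1 := Nat.le_of_dvd (by omega) (Nat.dvd_of_mem_primeFactors hp)
    omega
  have hfval : ∀ p : ℕ, p.Prime → p ≤ n → (f p).val = Nat.count Nat.Prime p := by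
    intro p hp hpn
    exact emb_val hn0 (lt_of_lt_of_le (count_prime_lt hp) hpn)
  have hfinj : ∀ p q : ℕ, p.Prime → p ≤ n → q.Prime → q ≤ n → f p = f q → p = q := by
    intro p q hp hpn hq hqn hpq
    have h1 : Nat.count Nat.Prime p = Nat.count Nat.Prime q := by
      have := congrArg Fin.val hpq
      rwa [hfval p hp hpn, hfval q hq hqn] at this
    calc p = Nat.nth Nat.Prime (Nat.count Nat.Prime p) := (Nat.nth_count hp).symm
    _ = Nat.nth Nat.Prime (Nat.count Nat.Prime q) := by rw [h1]
    _ = q := Nat.nth_count hq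
  have hSinjOn : ∀ m : ℕ, m ≤ n → Set.InjOn f ↑m.primeFactors := by
    intro m hmn p hp q hq hpq
    have hp' := hprimele m hmn p (Finset.mem_coe.mp hp)
    have hq' := hprimele m hmn q (Finset.mem_coe.mp hq)
    exact hfinj p q hp'.1 hp'.2 hq'.1 hq'.2 hpq
  have hScard : ∀ m ∈ A, (S m).card = k + 1 := by
    intro m hm
    obtain ⟨h1, h2, h3, h4⟩ := hmemA m hm
    rw [hS]
    rw [Finset.card_image_of_injOn (hSinjOn m h2), h4]
  have hSrecover : ∀ m : ℕ, m ≤ n →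
      (S m).image (fun x : Fin n => Nat.nth Nat.Prime x.val) = m.primeFactors := by
    intro m hmn
    rw [hS]
    rw [Finset.image_image]
    have heq : ∀ p ∈ m.primeFactors,
        ((fun x : Fin n => Nat.nth Nat.Prime x.val) ∘ f) p = id p := by
      intro p hp
      obtain ⟨hp1, hp2⟩ := hprimele m hmn p hp
      simp only [Function.comp_apply, id_eq]
      rw [hfval p hp1 hp2, Nat.nth_count hp1]
    rw [Finset.image_congr heq, Finset.image_id]
  have hSinjA : Set.InjOn S ↑A := by
    intro m1 h1 m2 h2 heq
    obtain ⟨h11, h12, h13, _⟩ := hmemA m1 (Finset.mem_coe.mp h1)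
    obtain ⟨h21, h22, h23, _⟩ := hmemA m2 (Finset.mem_coe.mp h2)
    have e1 := hSrecover m1 h12
    have e2 := hSrecover m2 h22
    rw [heq] at e1
    have hpf : m1.primeFactors = m2.primeFactors := by rw [← e1, ← e2]
    calc m1 = ∏ p ∈ m1.primeFactors, p := (Nat.prod_primeFactors_of_squarefree h13).symm
    _ = ∏ p ∈ m2.primeFactors, p := by rw [hpf]
    _ = m2 := Nat.prod_primeFactors_of_squarefree h23
  set F := A.image S with hF
  set Fo := Ao.image S with hFo
  have hAoA : Ao ⊆ A := fun m hm => (hmemAo m hm).2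
  have hFcard : F.card = A.card := Finset.card_image_of_injOn hSinjA
  have hFocard : Fo.card = Ao.card :=
    Finset.card_image_of_injOn (hSinjA.mono (by exact_mod_cast hAoA))
  have hFoF : Fo ⊆ F := Finset.image_subset_image hAoA
  have hFo_sized : (Fo : Set (Finset (Fin n))).Sized (k + 1) := by
    intro t ht
    rw [Finset.mem_coe, hFo, Finset.mem_image] at ht
    obtain ⟨m, hm, rfl⟩ := ht
    exact hScard m (hAoA hm)
  have hf2 : (f 2).val = 0 := by
    show (emb n hn0 (Nat.count Nat.Prime 2)).val = 0
    rw [count_two]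
    exact emb_val hn0 hn0
  have hf2notmem : ∀ t ∈ Fo, f 2 ∉ t := by
    intro t ht hmem
    rw [hFo, Finset.mem_image] at ht
    obtain ⟨m, hm, rfl⟩ := ht
    rw [hS, Finset.mem_image] at hmem
    obtain ⟨p, hp, hfp⟩ := hmem
    obtain ⟨hodd, hmA⟩ := hmemAo m hm
    obtain ⟨_, hmn', _, _⟩ := hmemA m hmA
    obtain ⟨hpp, hpn⟩ := hprimele m hmn' p hp
    have hp2 : p ≠ 2 := by
      rintro rfl
      have := Nat.dvd_of_mem_primeFactors hp
      have := Nat.odd_iff.mp hodd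
      omega
    have h3p : 3 ≤ p := by
      have := hpp.two_le
      omega
    have h1 : 1 ≤ Nat.count Nat.Prime p := by
      have h2 := Nat.count_monotone Nat.Prime h3p
      rw [count_three] at h2
      omega
    have := congrArg Fin.val hfp
    rw [hfval p hpp hpn, hf2] at this
    omega
  have hins_mem : ∀ t ∈ Finset.shadow Fo, insert (f 2) t ∈ F ∧ f 2 ∉ t := by
    intro t ht
    rw [Finset.mem_shadow_iff] at ht
    obtain ⟨t', ht', x, hx, rfl⟩ := ht
    have hnot := hf2notmem t' ht'
    have hf2t : f 2 ∉ t'.erase x := fun h => hnot (Finset.mem_of_mem_erase h)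
    refine ⟨?_, hf2t⟩
    rw [hFo, Finset.mem_image] at ht'
    obtain ⟨m, hm, rfl⟩ := ht'
    obtain ⟨hodd, hmA⟩ := hmemAo m hm
    obtain ⟨hm1, hmn', hsf, hcard⟩ := hmemA m hmA
    rw [hS, Finset.mem_image] at hx
    obtain ⟨p, hp, rfl⟩ := hx
    obtain ⟨m', hm'1, hm'n, hm'sf, hm'card, hm'pf⟩ :=
      even_partner hm1 hmn' hodd hsf hcard hp
    have hm'A : m' ∈ A := by
      rw [hA, Finset.mem_filter, Finset.mem_Icc]
      exact ⟨⟨hm'1, hm'n⟩, hm'sf, hm'card⟩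
    rw [hF, Finset.mem_image]
    refine ⟨m', hm'A, ?_⟩
    show m'.primeFactors.image f = _
    rw [hm'pf, Finset.image_insert]
    congr 1
    simp only [hS]
    ext y
    simp only [Finset.mem_image, Finset.mem_erase]
    constructor
    · rintro ⟨q, ⟨hqp, hq⟩, rfl⟩
      have hq' := hprimele m hmn' q hq
      have hp' := hprimele m hmn' p hp
      exact ⟨fun h => hqp (hfinj q p hq'.1 hq'.2 hp'.1 hp'.2 h), ⟨q, hq, rfl⟩⟩
    · rintro ⟨hy, q, hq, rfl⟩
      exact ⟨q, ⟨fun h => hy (by rw [h]), hq⟩, rfl⟩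
  have hinj2 : Set.InjOn (insert (f 2)) (Finset.shadow Fo : Set (Finset (Fin n))) := by
    intro t1 h1 t2 h2 heq
    have e1 := (hins_mem t1 (Finset.mem_coe.mp h1)).2
    have e2 := (hins_mem t2 (Finset.mem_coe.mp h2)).2
    have h3 : (insert (f 2) t1).erase (f 2) = (insert (f 2) t2).erase (f 2) := by rw [heq]
    rwa [Finset.erase_insert e1, Finset.erase_insert e2] at h3
  have hsub : Fo ∪ (Finset.shadow Fo).image (insert (f 2)) ⊆ F := by
    intro t ht
    rcases Finset.mem_union.mp ht with h | h
    · exact hFoF h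
    · rw [Finset.mem_image] at h
      obtain ⟨u, hu, rfl⟩ := h
      exact (hins_mem u hu).1
  have hdisj2 : Disjoint Fo ((Finset.shadow Fo).image (insert (f 2))) := by
    rw [Finset.disjoint_left]
    intro t htFo htim
    rw [Finset.mem_image] at htim
    obtain ⟨u, hu, rfl⟩ := htim
    exact hf2notmem _ htFo (Finset.mem_insert_self _ _)
  have hcardineq : Fo.card + (Finset.shadow Fo).card ≤ F.card := by
    have h1 := Finset.card_le_card hsub
    rwa [Finset.card_union_of_disjoint hdisj2, Finset.card_image_of_injOn hinj2] at h1
  -- chain for b - 1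
  have hbC : Ao.card ≤ Nat.choose n (k + 1) := by
    have h1 : Fo ⊆ Finset.powersetCard (k + 1) Finset.univ := by
      intro t ht
      rw [Finset.mem_powersetCard_univ]
      exact hFo_sized (Finset.mem_coe.mpr ht)
    have h2 := Finset.card_le_card h1
    rw [Finset.card_powersetCard, Finset.card_univ, Fintype.card_fin] at h2
    omega
  have hrn : k + 1 ≤ n := by
    by_contra hcon
    rw [Nat.choose_eq_zero_of_lt (by omega)] at hbC
    omega
  obtain ⟨c, hcmono, hcge, hcsum, hcbd⟩ := exists_chain (k + 1) (by omega) (Ao.card - 1)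
  have hcrn : c (k + 1) < n := hcbd n hrn (by omega)
  have hclt : ∀ j, 1 ≤ j → j ≤ k + 1 → c j < n := by
    intro j h1 h2
    rcases Nat.eq_or_lt_of_le h2 with h | h
    · exact h ▸ hcrn
    · exact lt_trans (chain_lt hcmono (k + 1) j h1 h le_rfl) hcrn
  set s := (Finset.Icc 1 (k + 1)).image (fun j => emb n hn0 (c j)) with hs
  have hscard2 : s.card = k + 1 := card_image_chain hn0 hcmono hclt
  have hseg_card : (Finset.Colex.initSeg s).card = Ao.card := by
    rw [hs, card_initSeg hn0 (k + 1) c hcmono hclt, hcsum]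
    omega
  have hKK : (Finset.shadow (Finset.Colex.initSeg s)).card ≤ (Finset.shadow Fo).card := by
    refine Finset.kruskal_katona hFo_sized ?_ ?_
    · rw [hseg_card, hFocard]
    · have h1 := Finset.Colex.isInitSeg_initSeg (s := s)
      rwa [hscard2] at h1
  have hne : s.Nonempty := by
    rw [hs]
    exact Finset.Nonempty.image ⟨1, by simp⟩ _
  have hshadow := Finset.Colex.shadow_initSeg (s := s) hne
  have herase : s.erase (s.min' hne)
      = (Finset.Icc 1 k).image (fun j => emb n hn0 (c (j + 1))) :=
    erase_min_image hn0 c hcmono hclt hne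
  have hshadow_card : (Finset.shadow (Finset.Colex.initSeg s)).card
      = 1 + ∑ j ∈ Finset.Icc 1 k, Nat.choose (c (j + 1)) j := by
    rw [hshadow, herase,
      card_initSeg hn0 k (fun j => c (j + 1)) (fun j h1 h2 => hcmono (j + 1) (by omega) (by omega))
        (fun j h1 h2 => hclt (j + 1) (by omega) (by omega))]
  -- final numeric computation
  have h1 : Ao.card + (1 + ∑ j ∈ Finset.Icc 1 k, Nat.choose (c (j + 1)) j) ≤ A.card := by
    rw [← hshadow_card, ← hFcard, ← hFocard]
    omega
  have hsum1 : ∑ j ∈ Finset.Icc 1 (k + 1), Nat.choose (c j + 1) j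
      = Nat.choose (c 1 + 1) 1 + ∑ j ∈ Finset.Icc 2 (k + 1), Nat.choose (c j + 1) j :=
    icc_bot_split 1 (k + 1) (by omega) _
  have hsum2 : ∑ j ∈ Finset.Icc 1 (k + 1), Nat.choose (c j) j
      = Nat.choose (c 1) 1 + ∑ j ∈ Finset.Icc 2 (k + 1), Nat.choose (c j) j :=
    icc_bot_split 1 (k + 1) (by omega) _
  have hsum3 : ∑ j ∈ Finset.Icc 2 (k + 1), Nat.choose (c j + 1) j
      = (∑ j ∈ Finset.Icc 2 (k + 1), Nat.choose (c j) (j - 1))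
        + ∑ j ∈ Finset.Icc 2 (k + 1), Nat.choose (c j) j := by
    rw [← Finset.sum_add_distrib]
    refine Finset.sum_congr rfl fun j hj => ?_
    rw [Finset.mem_Icc] at hj
    obtain ⟨i, rfl⟩ : ∃ i, j = i + 1 := ⟨j - 1, by omega⟩
    rw [Nat.add_sub_cancel]
    exact Nat.choose_succ_succ _ _
  have hsum4 : ∑ j ∈ Finset.Icc 2 (k + 1), Nat.choose (c j) (j - 1)
      = ∑ j ∈ Finset.Icc 1 k, Nat.choose (c (j + 1)) j := by
    rw [show Finset.Icc 2 (k + 1) = (Finset.Icc 1 k).image (· + 1) by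
      ext x
      simp only [Finset.mem_Icc, Finset.mem_image]
      constructor
      · intro h
        exact ⟨x - 1, by omega, by omega⟩
      · rintro ⟨a, ha, rfl⟩
        omega]
    rw [Finset.sum_image (by intro x _ y _ h; exact Nat.add_right_cancel h)]
    refine Finset.sum_congr rfl fun j hj => ?_
    rw [Nat.add_sub_cancel]
  have hc11 : Nat.choose (c 1 + 1) 1 = c 1 + 1 := Nat.choose_one_right _
  have hc12 : Nat.choose (c 1) 1 = c 1 := Nat.choose_one_right _
  have hfinal : 1 + ∑ j ∈ Finset.Icc 1 (k + 1), Nat.choose (c j + 1) j ≤ A.card := by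
    omega
  have hmain := numeric_main (r := k + 1) (a := A.card) (c := c) (by omega) hcmono hcge hfinal
  omega
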